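/- arXiv:1807.04634 — 6 statements merged into one kernel-verified Lean document; each statement's English description precedes it below -/
import Mathlib

section
/- Let F : ℝⁿ × ℝⁿ → ℝⁿ be a continuously differentiable force and define R(q,v) = ∫₀¹ ⟨F(q, s·v), v⟩ ds. Then for every (q,v) ∈ ℝⁿ × ℝⁿ, the derivative of R in the velocity variable evaluated in the direction v equals the power of F, i.e. Σᵢ (∂R/∂vⁱ)(q,v) · vⁱ = ⟨F(q,v), v⟩. -/
open RealInnerProductSpace MeasureTheory Metric Set

variable {n : ℕ}
local notation "E" => EuclideanSpace ℝ (Fin n)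

theorem rayleigh_aux (F : E × E → E) (hF : ContDiff ℝ 1 F) (q v : E) :
    ∃ L : E →L[ℝ] ℝ,
      HasFDerivAt (fun w : E => ∫ s in (0:ℝ)..1, ⟪F (q, s • w), w⟫) L v := by
  classical
  set P : E →L[ℝ] (E × E) := (0 : E →L[ℝ] E).prod (ContinuousLinearMap.id ℝ E) with hP
  set D : E → ℝ → (E →L[ℝ] ℝ) := fun x s =>
    innerSL ℝ (F (q, s • x)) +
      (innerSL ℝ x).comp ((fderiv ℝ F (q, s • x)).comp (s • P)) with hD
  -- differentiability pointwise
  have hdiff : ∀ (s : ℝ) (x : E),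
      HasFDerivAt (fun w : E => ⟪F (q, s • w), w⟫) (D x s) x := by
    intro s x
    have hg : HasFDerivAt (fun w : E => ((q : E), s • w)) (s • P) x := by
      have hfun : (fun w : E => ((q : E), s • w)) =
          fun w : E => ((q : E), (0 : E)) + (s • P) w := by
        funext w
        simp [hP, Prod.ext_iff]
      rw [hfun]
      exact (s • P).hasFDerivAt.const_add _
    have hf : HasFDerivAt (fun w : E => F (q, s • w))
        ((fderiv ℝ F (q, s • x)).comp (s • P)) x :=
      ((hF.differentiable one_ne_zero).differentiableAt.hasFDerivAt).comp x hg
    have := hf.inner ℝ (hasFDerivAt_id x)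
    refine this.congr_fderiv ?_
    ext u
    simp [hD, fderivInnerCLM_apply, real_inner_comm]
    exact real_inner_smul_right _ _ _
  -- compact set and bounds
  set K : Set (E × E) :=
    (fun p : ℝ × E => ((q : E), p.1 • p.2)) '' (Icc (0:ℝ) 1 ×ˢ closedBall v 1) with hK
  have hKc : IsCompact K :=
    (isCompact_Icc.prod (isCompact_closedBall v 1)).image (by fun_prop)
  obtain ⟨C₁, hC₁⟩ := hKc.exists_bound_of_continuousOn (hF.continuous.continuousOn)
  obtain ⟨C₂, hC₂⟩ := hKc.exists_bound_of_continuousOn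
    ((hF.continuous_fderiv one_ne_zero).continuousOn)
  have hmemK : ∀ s ∈ Set.uIoc (0:ℝ) 1, ∀ x ∈ ball v 1, ((q:E), s • x) ∈ K := by
    intro s hs x hx
    rw [Set.uIoc_of_le (by norm_num : (0:ℝ) ≤ 1)] at hs
    exact ⟨(s, x), ⟨⟨le_of_lt hs.1, hs.2⟩, ball_subset_closedBall hx⟩, rfl⟩
  have hPnorm : ‖P‖ ≤ 1 := by
    refine ContinuousLinearMap.opNorm_le_bound _ zero_le_one ?_
    intro u; simp [hP, Prod.norm_def]
  have hbound : ∀ s ∈ Set.uIoc (0:ℝ) 1, ∀ x ∈ ball v 1,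
      ‖D x s‖ ≤ |C₁| + (‖v‖ + 1) * |C₂| := by
    intro s hs x hx
    have hmem := hmemK s hs x hx
    have hs1 : |s| ≤ 1 := by
      rw [Set.uIoc_of_le (by norm_num : (0:ℝ) ≤ 1)] at hs
      rw [abs_of_pos hs.1]; exact hs.2
    have hxn : ‖x‖ ≤ ‖v‖ + 1 := by
      have := mem_ball_iff_norm.mp hx
      have h0 : x = v + (x - v) := by abel
      calc ‖x‖ = ‖v + (x - v)‖ := by rw [← h0]
        _ ≤ ‖v‖ + ‖x - v‖ := norm_add_le _ _
        _ ≤ ‖v‖ + 1 := by linarith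
    refine le_trans (norm_add_le _ _) ?_
    have h1 : ‖innerSL ℝ (F (q, s • x))‖ ≤ |C₁| := by
      rw [innerSL_apply_norm]
      exact (hC₁ _ hmem).trans (le_abs_self _)
    have h2 : ‖(innerSL ℝ x).comp ((fderiv ℝ F (q, s • x)).comp (s • P))‖ ≤
        (‖v‖ + 1) * |C₂| := by
      refine le_trans (ContinuousLinearMap.opNorm_comp_le _ _) ?_
      have hxx : ‖innerSL ℝ x‖ ≤ ‖v‖ + 1 := by rw [innerSL_apply_norm]; exact hxn
      have h3 : ‖(fderiv ℝ F (q, s • x)).comp (s • P)‖ ≤ |C₂| := by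
        refine le_trans (ContinuousLinearMap.opNorm_comp_le _ _) ?_
        have h4 : ‖s • P‖ ≤ 1 := by
          refine le_trans (norm_smul_le s P) ?_
          rw [Real.norm_eq_abs]
          have := mul_le_mul hs1 hPnorm (norm_nonneg _) zero_le_one
          linarith
        have h5 : ‖fderiv ℝ F (q, s • x)‖ * ‖s • P‖ ≤ |C₂| * 1 :=
          mul_le_mul ((hC₂ _ hmem).trans (le_abs_self _)) h4 (norm_nonneg _)
            (abs_nonneg _)
        linarith
      have h6 := mul_le_mul hxx h3 (norm_nonneg _)
        (by positivity : (0:ℝ) ≤ ‖v‖ + 1)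
      linarith
    linarith
  -- measurability / integrability
  have hcont : ∀ x : E, Continuous fun s : ℝ => ⟪F (q, s • x), x⟫ := by
    intro x
    exact Continuous.inner (hF.continuous.comp (by fun_prop)) continuous_const
  have hDcont : Continuous fun s : ℝ => D v s := by
    apply Continuous.add
    · exact (innerSL ℝ).continuous.comp (hF.continuous.comp (by fun_prop))
    · apply Continuous.clm_comp continuous_const
      apply Continuous.clm_comp
      · exact (hF.continuous_fderiv one_ne_zero).comp (by fun_prop)
      · exact (continuous_id.smul continuous_const : Continuous fun s : ℝ => s • P)
  refine ⟨∫ s in (0:ℝ)..1, D v s, ?_⟩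
  refine intervalIntegral.hasFDerivAt_integral_of_dominated_of_fderiv_le
    (s := ball v 1) (bound := fun _ => |C₁| + (‖v‖ + 1) * |C₂|) (ball_mem_nhds v one_pos) ?_ ?_ ?_ ?_ ?_ ?_
  · exact Filter.Eventually.of_forall fun x => (hcont x).aestronglyMeasurable
  · exact (hcont v).intervalIntegrable 0 1
  · exact hDcont.aestronglyMeasurable
  · exact Filter.Eventually.of_forall fun s hs x hx => hbound s hs x hx
  · exact intervalIntegrable_const
  · exact Filter.Eventually.of_forall fun s _ x _ => hdiff s x

theorem rayleigh_main
    (F : E × E → E)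
    (hF : ContDiff ℝ 1 F)
    (R : E × E → ℝ)
    (hR : ∀ q v : E, R (q, v) = ∫ s in (0:ℝ)..1, ⟪F (q, s • v), v⟫) :
    ∀ q v : E, fderiv ℝ (fun w => R (q, w)) v v = ⟪F (q, v), v⟫ := by
  intro q v
  obtain ⟨L, hL⟩ := rayleigh_aux F hF q v
  have hRw : (fun w : E => R (q, w)) =
      fun w : E => ∫ s in (0:ℝ)..1, ⟪F (q, s • w), w⟫ := funext (hR q)
  have hL' : HasFDerivAt (fun w : E => R (q, w)) L v := by rw [hRw]; exact hL
  -- chain rule along c ↦ c • v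
  have hsm : HasDerivAt (fun c : ℝ => c • v) v 1 := by
    simpa using (hasDerivAt_id (1:ℝ)).smul_const v
  have hc1 : HasDerivAt (fun c : ℝ => R (q, c • v)) (L v) 1 := by
    have hL'' : HasFDerivAt (fun w : E => R (q, w)) L ((1:ℝ) • v) := by
      rwa [one_smul]
    exact hL''.comp_hasDerivAt 1 hsm
  -- reparametrization
  have key : ∀ c : ℝ, R (q, c • v) = ∫ u in (0:ℝ)..c, ⟪F (q, u • v), v⟫ := by
    intro c
    rw [hR]
    have h1 : ∀ s : ℝ, ⟪F (q, s • (c • v)), c • v⟫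
        = c • ⟪F (q, (s * c) • v), v⟫ := by
      intro s
      rw [real_inner_smul_right, smul_smul, mul_comm s c, mul_comm c s]
      simp [smul_eq_mul]
    calc (∫ s in (0:ℝ)..1, ⟪F (q, s • (c • v)), c • v⟫)
        = ∫ s in (0:ℝ)..1, c • ⟪F (q, (s * c) • v), v⟫ := by
          simp only [h1]
      _ = c • ∫ s in (0:ℝ)..1, ⟪F (q, (s * c) • v), v⟫ :=
          intervalIntegral.integral_smul c _
      _ = ∫ u in (0:ℝ) * c..1 * c, ⟪F (q, u • v), v⟫ :=
          intervalIntegral.smul_integral_comp_mul_right (fun u : ℝ => ⟪F (q, u • v), v⟫) c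
      _ = ∫ u in (0:ℝ)..c, ⟪F (q, u • v), v⟫ := by norm_num
  have hcont : Continuous fun u : ℝ => ⟪F (q, u • v), v⟫ :=
    Continuous.inner (hF.continuous.comp (by fun_prop)) continuous_const
  have hc2 : HasDerivAt (fun c : ℝ => ∫ u in (0:ℝ)..c, ⟪F (q, u • v), v⟫)
      ⟪F (q, (1:ℝ) • v), v⟫ 1 :=
    intervalIntegral.integral_hasDerivAt_right (hcont.intervalIntegrable 0 1)
      (hcont.stronglyMeasurableAtFilter _ _) hcont.continuousAt
  have hc2' : HasDerivAt (fun c : ℝ => R (q, c • v)) ⟪F (q, (1:ℝ) • v), v⟫ 1 := by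
    have : (fun c : ℝ => R (q, c • v)) =
        fun c : ℝ => ∫ u in (0:ℝ)..c, ⟪F (q, u • v), v⟫ := funext key
    rw [this]; exact hc2
  have huniq : L v = ⟪F (q, (1:ℝ) • v), v⟫ := hc1.unique hc2'
  rw [hL'.fderiv, huniq, one_smul]


open RealInnerProductSpace

/-- For a continuously differentiable force `F` and `R(q,v) = ∫₀¹ ⟨F(q, s·v), v⟩ ds`,
the derivative of `R` in the velocity variable, evaluated in the direction `v`, equals the
power `⟨F(q,v), v⟩` of the force. -/
theorem rayleigh_function_power_identity
    (n : ℕ)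
    (F : EuclideanSpace ℝ (Fin n) × EuclideanSpace ℝ (Fin n) → EuclideanSpace ℝ (Fin n))
    (hF : ContDiff ℝ 1 F)
    (R : EuclideanSpace ℝ (Fin n) × EuclideanSpace ℝ (Fin n) → ℝ)
    (hR : ∀ q v : EuclideanSpace ℝ (Fin n),
      R (q, v) = ∫ s in (0:ℝ)..1, ⟪F (q, s • v), v⟫) :
    ∀ q v : EuclideanSpace ℝ (Fin n),
      fderiv ℝ (fun w => R (q, w)) v v = ⟪F (q, v), v⟫ := by
  exact rayleigh_main F hF R hR
end

section
/- Let F : ℝⁿ × ℝⁿ → ℝⁿ be a continuously differentiable force, let R(q,v) = ∫₀¹ ⟨F(q, s·v), v⟩ ds, and suppose R̃ : ℝⁿ × ℝⁿ → ℝ is a differentiable function satisfying Σᵢ (∂R̃/∂vⁱ)(q,v) · vⁱ = ⟨F(q,v), v⟩ for all (q,v). Then there exists a function f : ℝⁿ → ℝ such that R̃(q,v) = R(q,v) + f(q) for all (q,v) ∈ ℝⁿ × ℝⁿ; in particular the difference R̃ − R depends only on the position variable q. -/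
open RealInnerProductSpace

/-- If `R(q,v) = ∫₀¹ ⟨F(q, s·v), v⟩ ds` and `R̃` is any differentiable function whose velocity
derivative in the direction `v` equals the power `⟨F(q,v), v⟩`, then `R̃ − R` depends only on
the position variable: `R̃(q,v) = R(q,v) + f(q)` for some `f : ℝⁿ → ℝ`. -/
theorem rayleigh_function_unique_up_to_position_function
    (n : ℕ)
    (F : EuclideanSpace ℝ (Fin n) × EuclideanSpace ℝ (Fin n) → EuclideanSpace ℝ (Fin n))
    (hF : ContDiff ℝ 1 F)
    (R : EuclideanSpace ℝ (Fin n) × EuclideanSpace ℝ (Fin n) → ℝ)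
    (hR : ∀ q v : EuclideanSpace ℝ (Fin n),
      R (q, v) = ∫ s in (0:ℝ)..1, ⟪F (q, s • v), v⟫)
    (R' : EuclideanSpace ℝ (Fin n) × EuclideanSpace ℝ (Fin n) → ℝ)
    (hR'diff : Differentiable ℝ R')
    (hR' : ∀ q v : EuclideanSpace ℝ (Fin n),
      fderiv ℝ (fun w => R' (q, w)) v v = ⟪F (q, v), v⟫) :
    ∃ f : EuclideanSpace ℝ (Fin n) → ℝ,
      ∀ q v : EuclideanSpace ℝ (Fin n), R' (q, v) = R (q, v) + f q := by
  refine ⟨fun q => R' (q, 0), fun q v => ?_⟩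
  -- φ is the velocity slice of R'
  set φ : EuclideanSpace ℝ (Fin n) → ℝ := fun w => R' (q, w) with hφdef
  have hφ : Differentiable ℝ φ :=
    hR'diff.comp ((differentiable_const q).prodMk differentiable_id)
  -- the integrand, continuous in s
  set h : ℝ → ℝ := fun s => ⟪F (q, s • v), v⟫ with hhdef
  have hline : Continuous fun s : ℝ => (q, s • v) :=
    continuous_const.prodMk (continuous_id.smul continuous_const)
  have hcont : Continuous h := ((hF.continuous.comp hline).inner continuous_const)
  -- derivative of g(s) = φ (s • v) on (0,1)
  have hderiv : ∀ s ∈ Set.Ioo (0:ℝ) 1,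
      HasDerivAt (fun s : ℝ => φ (s • v)) (h s) s := by
    intro s hs
    have hsm : HasDerivAt (fun s : ℝ => s • v) v s := by
      simpa using (hasDerivAt_id s).smul_const v
    have hD : HasDerivAt (fun s : ℝ => φ (s • v))
        (fderiv ℝ φ (s • v) v) s :=
      by have := (hφ (s • v)).hasFDerivAt.comp_hasDerivAt s hsm; exact this
    have key : fderiv ℝ φ (s • v) v = h s := by
      have h1 : fderiv ℝ φ (s • v) (s • v) = ⟪F (q, s • v), s • v⟫ := hR' q (s • v)
      have h2 : fderiv ℝ φ (s • v) (s • v) = s * fderiv ℝ φ (s • v) v := by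
        rw [map_smul]; simp
      have h3 : ⟪F (q, s • v), s • v⟫ = s * h s := real_inner_smul_right _ _ _
      have hs0 : s ≠ 0 := ne_of_gt hs.1
      have := h1
      rw [h2, h3] at this
      exact mul_left_cancel₀ hs0 this
    rwa [key] at hD
  have hgcont : ContinuousOn (fun s : ℝ => φ (s • v)) (Set.Icc 0 1) :=
    ((hφ.continuous.comp (continuous_id.smul continuous_const))).continuousOn
  have hint : IntervalIntegrable h MeasureTheory.volume 0 1 :=
    hcont.intervalIntegrable 0 1
  have ftc : ∫ s in (0:ℝ)..1, h s = φ ((1:ℝ) • v) - φ ((0:ℝ) • v) :=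
    intervalIntegral.integral_eq_sub_of_hasDeriv_right_of_le zero_le_one hgcont
      (fun s hs => (hderiv s hs).hasDerivWithinAt) hint
  simp only [one_smul, zero_smul] at ftc
  have : R (q, v) = φ v - φ 0 := by rw [hR q v, ← ftc]
  simp only [hφdef] at this
  linarith
end

section
/- Let F : ℝⁿ × ℝⁿ → ℝⁿ be a continuously differentiable force. Then there exist a differentiable function R : ℝⁿ × ℝⁿ → ℝ and a gyroscopic force G : ℝⁿ × ℝⁿ → ℝⁿ such that F(q,v) = ∇ᵥR(q,v) + G(q,v) for all (q,v) ∈ ℝⁿ × ℝⁿ; that is, every continuously differentiable force is the sum of a Rayleigh force and a gyroscopic force. -/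
open RealInnerProductSpace

section Aux

variable {n : ℕ}

local notation "E" => EuclideanSpace ℝ (Fin n)

/-- Auxiliary: the integrand `((q,v),t) ↦ ⟪F (q, t•v), v⟫` is `C¹`. -/
theorem force_aux_contDiff (F : E × E → E) (hF : ContDiff ℝ 1 F) :
    ContDiff ℝ 1 (fun p : (E × E) × ℝ => ⟪F (p.1.1, p.2 • p.1.2), p.1.2⟫) := by
  refine ContDiff.inner ℝ ?_ (contDiff_snd.comp contDiff_fst)
  exact hF.comp (((contDiff_fst.comp contDiff_fst)).prodMk
    (contDiff_snd.smul (contDiff_snd.comp contDiff_fst)))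

set_option synthInstance.maxHeartbeats 1000000 in
/-- Auxiliary: differentiability of a parametric interval integral of a `C¹` integrand. -/
theorem param_integral_differentiable {H : Type*} [NormedAddCommGroup H]
    [NormedSpace ℝ H] [ProperSpace H] (f : H × ℝ → ℝ) (hf : ContDiff ℝ 1 f) :
    Differentiable ℝ (fun x : H => ∫ t in (0:ℝ)..1, f (x, t)) := by
  intro x₀
  have hfc : Continuous f := hf.continuous
  have hfd : Differentiable ℝ f := hf.differentiable one_ne_zero
  have hfderiv_cont : Continuous (fderiv ℝ f) := hf.continuous_fderiv one_ne_zero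
  -- partial derivatives in the `H` direction
  have hpd : ∀ (t : ℝ) (x : H), HasFDerivAt (fun y : H => f (y, t))
      ((fderiv ℝ f (x, t)).comp (ContinuousLinearMap.inl ℝ H ℝ)) x := fun t x =>
    ((hfd (x, t)).hasFDerivAt).comp x (hasFDerivAt_prodMk_left x t)
  -- op norm bound for composition with `inl`
  have hinl : ∀ L : H × ℝ →L[ℝ] ℝ, ‖L.comp (ContinuousLinearMap.inl ℝ H ℝ)‖ ≤ ‖L‖ := by
    intro L
    refine ContinuousLinearMap.opNorm_le_bound _ (norm_nonneg L) fun y => ?_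
    have := L.le_opNorm (y, (0:ℝ))
    simpa [Prod.norm_def] using this
  -- uniform bound on a compact set
  obtain ⟨C, hC⟩ := ((isCompact_closedBall x₀ 1).prod isCompact_Icc).exists_bound_of_continuousOn
    (hfderiv_cont.continuousOn (s := Metric.closedBall x₀ 1 ×ˢ Set.Icc (0:ℝ) 1))
  set F' : ℝ → (H →L[ℝ] ℝ) :=
    fun t => (fderiv ℝ f (x₀, t)).comp (ContinuousLinearMap.inl ℝ H ℝ) with hF'
  have hF'cont : Continuous F' := by
    exact (hfderiv_cont.comp (continuous_const.prodMk continuous_id)).clm_comp continuous_const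
  have key := intervalIntegral.hasFDerivAt_integral_of_dominated_loc_of_lip
    (F := fun (x : H) (t : ℝ) => f (x, t)) (F' := F') (x₀ := x₀) (a := 0) (b := 1)
    (μ := MeasureTheory.volume) (bound := fun _ => |C|) (s := Metric.ball x₀ 1) (Metric.ball_mem_nhds x₀ one_pos)
    (Filter.Eventually.of_forall fun x =>
      ((hfc.comp (continuous_const.prodMk continuous_id)).aestronglyMeasurable))
    ((hfc.comp (continuous_const.prodMk continuous_id)).intervalIntegrable 0 1)
    hF'cont.aestronglyMeasurable
    ?_ intervalIntegrable_const
    (MeasureTheory.ae_of_all _ fun t _ => hpd t x₀)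
  · exact key.2.differentiableAt
  · refine MeasureTheory.ae_of_all _ fun t ht => ?_
    have ht' : t ∈ Set.Icc (0:ℝ) 1 := by
      rw [Set.uIoc_of_le (by norm_num : (0:ℝ) ≤ 1)] at ht
      exact Set.mem_of_mem_of_subset ht Set.Ioc_subset_Icc_self
    refine (convex_ball x₀ 1).lipschitzOnWith_of_nnnorm_fderiv_le
      (fun x _ => (hpd t x).differentiableAt) (fun x hx => ?_)
    have hball : x ∈ Metric.closedBall x₀ 1 := Metric.ball_subset_closedBall hx
    have hfd_eq : fderiv ℝ (fun y : H => f (y, t)) x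
        = (fderiv ℝ f (x, t)).comp (ContinuousLinearMap.inl ℝ H ℝ) := (hpd t x).fderiv
    rw [← NNReal.coe_le_coe]
    simp only [coe_nnnorm, Real.coe_nnabs]
    rw [hfd_eq]
    calc ‖(fderiv ℝ f (x, t)).comp (ContinuousLinearMap.inl ℝ H ℝ)‖
        ≤ ‖fderiv ℝ f (x, t)‖ := hinl _
      _ ≤ C := hC _ ⟨hball, ht'⟩
      _ ≤ |C| := le_abs_self C
      _ ≤ |(|C|)| := le_abs_self _

end Aux

/-- Every continuously differentiable force `F : ℝⁿ × ℝⁿ → ℝⁿ` is the sum of a Rayleigh force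
`∇ᵥR` and a gyroscopic force `G`. -/
theorem force_decomposition_exists
    (n : ℕ)
    (F : EuclideanSpace ℝ (Fin n) × EuclideanSpace ℝ (Fin n) → EuclideanSpace ℝ (Fin n))
    (hF : ContDiff ℝ 1 F) :
    ∃ (R : EuclideanSpace ℝ (Fin n) × EuclideanSpace ℝ (Fin n) → ℝ)
      (G : EuclideanSpace ℝ (Fin n) × EuclideanSpace ℝ (Fin n) → EuclideanSpace ℝ (Fin n)),
      Differentiable ℝ R ∧
      (∀ q v : EuclideanSpace ℝ (Fin n), ⟪G (q, v), v⟫ = 0) ∧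
      (∀ q v : EuclideanSpace ℝ (Fin n),
        F (q, v) = gradient (fun w => R (q, w)) v + G (q, v)) := by
  set f : (EuclideanSpace ℝ (Fin n) × EuclideanSpace ℝ (Fin n)) × ℝ → ℝ :=
    fun p => ⟪F (p.1.1, p.2 • p.1.2), p.1.2⟫ with hf_def
  have hf1 : ContDiff ℝ 1 f := force_aux_contDiff F hF
  set R : EuclideanSpace ℝ (Fin n) × EuclideanSpace ℝ (Fin n) → ℝ :=
    fun x => ∫ t in (0:ℝ)..1, f (x, t) with hR_def
  have hRdiff : Differentiable ℝ R := param_integral_differentiable f hf1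
  -- partial differentiability in `v`
  have hRq : ∀ q, Differentiable ℝ (fun w => R (q, w)) := fun q =>
    hRdiff.comp ((differentiable_const q).prodMk differentiable_id)
  -- the key radial identity
  have key : ∀ q v : EuclideanSpace ℝ (Fin n),
      fderiv ℝ (fun w => R (q, w)) v v = ⟪F (q, v), v⟫ := by
    intro q v
    set h : ℝ → ℝ := fun u => ⟪F (q, u • v), v⟫ with hh_def
    have hhc : Continuous h :=
      (hF.continuous.comp (continuous_const.prodMk
        (continuous_id.smul continuous_const))).inner continuous_const
    have hψ : ∀ s : ℝ, R (q, s • v) = ∫ u in (0:ℝ)..s, h u := by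
      intro s
      by_cases hs : s = 0
      · subst hs
        simp [hR_def, hf_def]
      · have step1 : R (q, s • v) = ∫ t in (0:ℝ)..1, s * h (s * t) := by
          refine intervalIntegral.integral_congr fun t _ => ?_
          simp only [hf_def, hh_def, smul_smul, real_inner_smul_right]
          ring_nf
        rw [step1]
        rw [intervalIntegral.integral_const_mul]
        have step2 : (∫ t in (0:ℝ)..1, h (s * t)) = s⁻¹ • ∫ u in (0:ℝ)..s, h u := by
          simpa using intervalIntegral.integral_comp_mul_left h hs (a := 0) (b := 1)
        rw [step2, smul_eq_mul, ← mul_assoc, mul_inv_cancel₀ hs, one_mul]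
    -- derivative of `s ↦ R (q, s • v)` at `1`, two ways
    have hd1 : HasDerivAt (fun s : ℝ => R (q, s • v)) (h 1) 1 := by
      have hder : HasDerivAt (fun s : ℝ => ∫ u in (0:ℝ)..s, h u) (h 1) 1 :=
        intervalIntegral.integral_hasDerivAt_right (hhc.intervalIntegrable 0 1)
          (hhc.stronglyMeasurableAtFilter _ _) hhc.continuousAt
      have : (fun s : ℝ => R (q, s • v)) = fun s : ℝ => ∫ u in (0:ℝ)..s, h u :=
        funext hψ
      rw [this]
      exact hder
    have hsmul : HasDerivAt (fun s : ℝ => s • v) v 1 := by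
      simpa using (hasDerivAt_id (1:ℝ)).smul_const v
    have hd2 : HasDerivAt (fun s : ℝ => R (q, s • v)) (fderiv ℝ (fun w => R (q, w)) v v) 1 := by
      have hfd : HasFDerivAt (fun w => R (q, w)) (fderiv ℝ (fun w => R (q, w)) v)
          ((1:ℝ) • v) := by
        rw [one_smul]
        exact (hRq q v).hasFDerivAt
      exact hfd.comp_hasDerivAt 1 hsmul
    have := hd2.unique hd1
    rw [this, hh_def]
    simp
  refine ⟨R, fun x => F x - gradient (fun w => R (x.1, w)) x.2, hRdiff, ?_, ?_⟩
  · intro q v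
    have hgrad : ⟪gradient (fun w => R (q, w)) v, v⟫ = fderiv ℝ (fun w => R (q, w)) v v := by
      unfold gradient
      exact InnerProductSpace.toDual_symm_apply
    simp only [inner_sub_left, hgrad, key q v, sub_self]
  · intro q v
    module
end

section
/- Let F : ℝⁿ × ℝⁿ → ℝⁿ be a continuously differentiable force and define R(q,v) = ∫₀¹ ⟨F(q, s·v), v⟩ ds. Then the force G : ℝⁿ × ℝⁿ → ℝⁿ defined by G(q,v) = F(q,v) − ∇ᵥR(q,v) is gyroscopic, i.e. ⟨G(q,v), v⟩ = 0 for all (q,v) ∈ ℝⁿ × ℝⁿ. -/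
open RealInnerProductSpace MeasureTheory Metric

set_option maxHeartbeats 2000000

/-- For a continuously differentiable force `F` with `R(q,v) = ∫₀¹ ⟨F(q, s·v), v⟩ ds`, the
force `G(q,v) = F(q,v) − ∇ᵥR(q,v)` is gyroscopic: `⟨G(q,v), v⟩ = 0` for all `(q,v)`. -/
theorem force_minus_rayleigh_is_gyroscopic
    (n : ℕ)
    (F : EuclideanSpace ℝ (Fin n) × EuclideanSpace ℝ (Fin n) → EuclideanSpace ℝ (Fin n))
    (hF : ContDiff ℝ 1 F)
    (R : EuclideanSpace ℝ (Fin n) × EuclideanSpace ℝ (Fin n) → ℝ)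
    (hR : ∀ q v : EuclideanSpace ℝ (Fin n),
      R (q, v) = ∫ s in (0:ℝ)..1, ⟪F (q, s • v), v⟫)
    (G : EuclideanSpace ℝ (Fin n) × EuclideanSpace ℝ (Fin n) → EuclideanSpace ℝ (Fin n))
    (hG : ∀ q v : EuclideanSpace ℝ (Fin n),
      G (q, v) = F (q, v) - gradient (fun w => R (q, w)) v) :
    ∀ q v : EuclideanSpace ℝ (Fin n), ⟪G (q, v), v⟫ = 0 := by
  intro q v
  have hFd : Differentiable ℝ F := hF.differentiable one_ne_zero
  have hFc : Continuous F := hF.continuous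
  have hF'c : Continuous (fderiv ℝ F) := hF.continuous_fderiv one_ne_zero
  set f : EuclideanSpace ℝ (Fin n) → ℝ → ℝ := fun w t => ⟪F (q, t • w), w⟫ with hfdef
  set Φ : EuclideanSpace ℝ (Fin n) → ℝ → (EuclideanSpace ℝ (Fin n) →L[ℝ] ℝ) := fun w t =>
    (fderivInnerCLM ℝ (F (q, t • w), w)).comp
      ((((fderiv ℝ F (q, t • w)).comp
          ((0 : EuclideanSpace ℝ (Fin n) →L[ℝ] EuclideanSpace ℝ (Fin n)).prod
            (t • ContinuousLinearMap.id ℝ (EuclideanSpace ℝ (Fin n))))).prod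
        (ContinuousLinearMap.id ℝ (EuclideanSpace ℝ (Fin n))))) with hΦdef
  -- pointwise differentiability with derivative Φ
  have key : ∀ (t : ℝ) (x : EuclideanSpace ℝ (Fin n)),
      HasFDerivAt (fun w => f w t) (Φ x t) x := by
    intro t x
    have h1 : HasFDerivAt
        (fun w : EuclideanSpace ℝ (Fin n) =>
          ((q, t • w) : EuclideanSpace ℝ (Fin n) × EuclideanSpace ℝ (Fin n)))
        ((0 : EuclideanSpace ℝ (Fin n) →L[ℝ] EuclideanSpace ℝ (Fin n)).prod
          (t • ContinuousLinearMap.id ℝ (EuclideanSpace ℝ (Fin n)))) x :=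
      (hasFDerivAt_const q x).prodMk ((hasFDerivAt_id x).const_smul t)
    have h2 := (hFd (q, t • x)).hasFDerivAt.comp x h1
    exact h2.inner ℝ (hasFDerivAt_id x)
  -- bounds on a compact set
  set K : Set (EuclideanSpace ℝ (Fin n) × EuclideanSpace ℝ (Fin n)) :=
    ({q} : Set (EuclideanSpace ℝ (Fin n))) ×ˢ closedBall (0 : EuclideanSpace ℝ (Fin n)) (‖v‖ + 1)
    with hKdef
  have hKcomp : IsCompact K := isCompact_singleton.prod (isCompact_closedBall _ _)
  obtain ⟨C₁, hC₁⟩ := hKcomp.exists_bound_of_continuousOn hFc.continuousOn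
  obtain ⟨C₂, hC₂⟩ := hKcomp.exists_bound_of_continuousOn hF'c.continuousOn
  set C : ℝ := max C₁ 0 + max C₂ 0 * (‖v‖ + 1) with hCdef
  have hmemK : ∀ t : ℝ, t ∈ Set.Ioc (0:ℝ) 1 → ∀ x ∈ ball v 1, (q, t • x) ∈ K := by
    intro t ht x hx
    have hx1 : ‖x‖ ≤ ‖v‖ + 1 := by
      have := mem_ball_iff_norm.mp hx
      have h2 : ‖x‖ - ‖v‖ ≤ ‖x - v‖ := norm_sub_norm_le x v
      linarith
    have : ‖t • x‖ ≤ ‖v‖ + 1 := by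
      rw [norm_smul, Real.norm_eq_abs]
      have htabs : |t| ≤ 1 := by rw [abs_le]; constructor <;> [linarith [ht.1]; exact ht.2]
      have hxnn : (0:ℝ) ≤ ‖x‖ := norm_nonneg x
      nlinarith [norm_nonneg v, abs_nonneg t]
    exact ⟨rfl, by simpa [mem_closedBall, dist_eq_norm] using this⟩
  -- uniform bound on the derivative
  have hbound : ∀ t : ℝ, t ∈ Set.Ioc (0:ℝ) 1 → ∀ x ∈ ball v 1, ‖Φ x t‖ ≤ C := by
    intro t ht x hx
    have hmem := hmemK t ht x hx
    have hb1 : ‖F (q, t • x)‖ ≤ max C₁ 0 := le_trans (hC₁ _ hmem) (le_max_left _ _)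
    have hb2 : ‖fderiv ℝ F (q, t • x)‖ ≤ max C₂ 0 := le_trans (hC₂ _ hmem) (le_max_left _ _)
    have hx1 : ‖x‖ ≤ ‖v‖ + 1 := by
      have := mem_ball_iff_norm.mp hx
      have h2 : ‖x‖ - ‖v‖ ≤ ‖x - v‖ := norm_sub_norm_le x v
      linarith
    have hCnn : (0:ℝ) ≤ C := by
      have : (0:ℝ) ≤ ‖v‖ + 1 := by positivity
      have := le_max_right C₁ 0
      have := le_max_right C₂ 0
      nlinarith
    set D := fderiv ℝ F (q, t • x) with hDdef
    set a := F (q, t • x) with hadef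
    apply ContinuousLinearMap.opNorm_le_bound _ hCnn
    intro dw
    have hdwnn : (0:ℝ) ≤ ‖dw‖ := norm_nonneg dw
    have hxnn : (0:ℝ) ≤ ‖x‖ := norm_nonneg x
    have hvnn : (0:ℝ) ≤ ‖v‖ + 1 := by positivity
    have happ : Φ x t dw =
        ⟪a, dw⟫ + ⟪D ((0 : EuclideanSpace ℝ (Fin n)), t • dw), x⟫ := by
      simp [hΦdef, hDdef, hadef, ContinuousLinearMap.prod_apply]
    rw [happ]
    have hz : ‖((0 : EuclideanSpace ℝ (Fin n)), t • dw)‖ ≤ ‖dw‖ := by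
      rw [Prod.norm_def]
      simp only [norm_zero, norm_smul, Real.norm_eq_abs]
      refine max_le hdwnn ?_
      have htabs : |t| ≤ 1 := by rw [abs_le]; constructor <;> [linarith [ht.1]; exact ht.2]
      nlinarith [abs_nonneg t]
    have step1 : |⟪a, dw⟫| ≤ max C₁ 0 * ‖dw‖ :=
      le_trans (abs_real_inner_le_norm a dw) (mul_le_mul_of_nonneg_right hb1 hdwnn)
    have step2 : |⟪D ((0 : EuclideanSpace ℝ (Fin n)), t • dw), x⟫| ≤
        max C₂ 0 * ‖dw‖ * (‖v‖ + 1) := by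
      refine le_trans (abs_real_inner_le_norm _ _) ?_
      have hDz : ‖D ((0 : EuclideanSpace ℝ (Fin n)), t • dw)‖ ≤ max C₂ 0 * ‖dw‖ :=
        le_trans (D.le_opNorm _)
          (mul_le_mul hb2 hz (norm_nonneg _) (le_max_right C₂ 0))
      exact mul_le_mul hDz hx1 hxnn (by positivity)
    have hnorm : ‖(⟪a, dw⟫ + ⟪D ((0 : EuclideanSpace ℝ (Fin n)), t • dw), x⟫ : ℝ)‖ ≤
        |⟪a, dw⟫| + |⟪D ((0 : EuclideanSpace ℝ (Fin n)), t • dw), x⟫| := by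
      rw [Real.norm_eq_abs]; exact abs_add_le _ _
    refine le_trans hnorm ?_
    have hring : C * ‖dw‖ = max C₁ 0 * ‖dw‖ + max C₂ 0 * ‖dw‖ * (‖v‖ + 1) := by
      rw [hCdef]; ring
    rw [hring]
    exact add_le_add step1 step2
  -- continuity facts
  have hcontf : ∀ x : EuclideanSpace ℝ (Fin n), Continuous (fun t => f x t) := by
    intro x
    exact Continuous.inner
      (hFc.comp (continuous_const.prodMk (continuous_id.smul continuous_const)))
      continuous_const
  have hcontΦ : Continuous (fun t => Φ v t) := by
    have c1 : Continuous fun t : ℝ => fderivInnerCLM ℝ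
        ((F (q, t • v), v) : EuclideanSpace ℝ (Fin n) × EuclideanSpace ℝ (Fin n)) := by
      exact (isBoundedBilinearMap_inner (𝕜 := ℝ)
          (E := EuclideanSpace ℝ (Fin n))).isBoundedLinearMap_deriv.continuous.comp
        ((hFc.comp (continuous_const.prodMk
          (continuous_id.smul continuous_const))).prodMk continuous_const)
    have c2 : Continuous fun t : ℝ => fderiv ℝ F (q, t • v) :=
      hF'c.comp (continuous_const.prodMk (continuous_id.smul continuous_const))
    have c3 : Continuous fun t : ℝ =>
        ((0 : EuclideanSpace ℝ (Fin n) →L[ℝ] EuclideanSpace ℝ (Fin n)).prod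
          (t • ContinuousLinearMap.id ℝ (EuclideanSpace ℝ (Fin n)))) := by
      have heq : ∀ t : ℝ,
          ((0 : EuclideanSpace ℝ (Fin n) →L[ℝ] EuclideanSpace ℝ (Fin n)).prod
            (t • ContinuousLinearMap.id ℝ (EuclideanSpace ℝ (Fin n)))) =
          t • ((0 : EuclideanSpace ℝ (Fin n) →L[ℝ] EuclideanSpace ℝ (Fin n)).prod
            (ContinuousLinearMap.id ℝ (EuclideanSpace ℝ (Fin n)))) := by
        intro t; ext dw <;> simp
      simp only [heq]
      exact continuous_id.smul continuous_const
    have c4 : Continuous fun t : ℝ => ((fderiv ℝ F (q, t • v)).comp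
        ((0 : EuclideanSpace ℝ (Fin n) →L[ℝ] EuclideanSpace ℝ (Fin n)).prod
          (t • ContinuousLinearMap.id ℝ (EuclideanSpace ℝ (Fin n))))) :=
      c2.clm_comp c3
    have c5 : Continuous fun t : ℝ => (((fderiv ℝ F (q, t • v)).comp
        ((0 : EuclideanSpace ℝ (Fin n) →L[ℝ] EuclideanSpace ℝ (Fin n)).prod
          (t • ContinuousLinearMap.id ℝ (EuclideanSpace ℝ (Fin n))))).prod
        (ContinuousLinearMap.id ℝ (EuclideanSpace ℝ (Fin n)))) := by
      have heq5 : ∀ B : EuclideanSpace ℝ (Fin n) →L[ℝ] EuclideanSpace ℝ (Fin n),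
          B.prod (ContinuousLinearMap.id ℝ (EuclideanSpace ℝ (Fin n))) =
          (ContinuousLinearMap.inl ℝ (EuclideanSpace ℝ (Fin n))
            (EuclideanSpace ℝ (Fin n))).comp B +
          ContinuousLinearMap.inr ℝ (EuclideanSpace ℝ (Fin n)) (EuclideanSpace ℝ (Fin n)) := by
        intro B; ext dw <;> simp
      simp only [heq5]
      exact (Continuous.clm_comp continuous_const c4).add continuous_const
    exact c1.clm_comp c5
  -- differentiation under the integral sign
  have HB : HasFDerivAt (fun w => ∫ t in (0:ℝ)..1, f w t)
      (∫ t in (0:ℝ)..1, Φ v t) v := by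
    apply intervalIntegral.hasFDerivAt_integral_of_dominated_of_fderiv_le
      (s := ball v 1) (bound := fun _ => C) (ball_mem_nhds v one_pos)
    · exact Filter.Eventually.of_forall fun x => ((hcontf x).aestronglyMeasurable)
    · exact (hcontf v).intervalIntegrable 0 1
    · exact hcontΦ.aestronglyMeasurable
    · refine Filter.Eventually.of_forall fun t ht x hx => ?_
      rw [Set.uIoc_of_le (by norm_num : (0:ℝ) ≤ 1)] at ht
      exact hbound t ht x hx
    · exact intervalIntegrable_const
    · exact Filter.Eventually.of_forall fun t _ x _ => key t x
  have hRfun : (fun w => R (q, w)) = fun w => ∫ t in (0:ℝ)..1, f w t :=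
    funext fun w => hR q w
  have HB' : HasFDerivAt (fun w => R (q, w)) (∫ t in (0:ℝ)..1, Φ v t) v := by
    rw [hRfun]; exact HB
  -- FTC and scaling: derivative of t ↦ R (q, t • v) at 1
  have ftc : HasDerivAt (fun t : ℝ => ∫ u in (0:ℝ)..t, f v u) (f v 1) (1:ℝ) :=
    intervalIntegral.integral_hasDerivAt_right ((hcontf v).intervalIntegrable 0 1)
      (hcontf v).stronglyMeasurable.stronglyMeasurableAtFilter (hcontf v).continuousAt
  have heq : (fun t : ℝ => R (q, t • v)) =ᶠ[nhds (1:ℝ)] (fun t : ℝ => ∫ u in (0:ℝ)..t, f v u) := by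
    filter_upwards [eventually_ne_nhds one_ne_zero] with t ht
    rw [hR]
    have hinner : ∀ s : ℝ, ⟪F (q, s • (t • v)), t • v⟫ = t * f v (s * t) := by
      intro s
      rw [smul_smul, real_inner_smul_right, hfdef]
    simp only [hinner]
    rw [intervalIntegral.integral_const_mul,
      intervalIntegral.integral_comp_mul_right (fun u => f v u) ht]
    simp only [zero_mul, one_mul, smul_eq_mul]
    rw [mul_inv_cancel_left₀ ht]
  have hderiv1 : HasDerivAt (fun t : ℝ => R (q, t • v)) (f v 1) (1:ℝ) :=
    ftc.congr_of_eventuallyEq heq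
  have hsmul : HasDerivAt (fun t : ℝ => t • v) v 1 := by
    simpa using (hasDerivAt_id (1:ℝ)).smul_const v
  have HB'' : HasFDerivAt (fun w => R (q, w)) (∫ t in (0:ℝ)..1, Φ v t) ((1:ℝ) • v) := by
    rw [one_smul]; exact HB'
  have hderiv2 : HasDerivAt (fun t : ℝ => R (q, t • v)) ((∫ t in (0:ℝ)..1, Φ v t) v) (1:ℝ) := by
    have := HB''.comp_hasDerivAt (1:ℝ) hsmul
    simpa [Function.comp_def] using this
  have hLv : (∫ t in (0:ℝ)..1, Φ v t) v = f v 1 := hderiv2.unique hderiv1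
  have hgrad : gradient (fun w => R (q, w)) v =
      (InnerProductSpace.toDual ℝ (EuclideanSpace ℝ (Fin n))).symm (∫ t in (0:ℝ)..1, Φ v t) :=
    HasGradientAt.gradient (hasFDerivAt_iff_hasGradientAt.mp HB')
  rw [hG, inner_sub_left, hgrad, InnerProductSpace.toDual_symm_apply, hLv, hfdef]
  simp
end

section
/- Let F : ℝⁿ × ℝⁿ → ℝⁿ be a continuously differentiable force, and suppose F = ∇ᵥR + G = ∇ᵥR̃ + G̃ where R, R̃ : ℝⁿ × ℝⁿ → ℝ are differentiable functions and G, G̃ : ℝⁿ × ℝⁿ → ℝⁿ are gyroscopic forces. Then ∇ᵥR(q,v) = ∇ᵥR̃(q,v) and G(q,v) = G̃(q,v) for all (q,v) ∈ ℝⁿ × ℝⁿ; that is, the decomposition of a force into the sum of a Rayleigh force and a gyroscopic force is unique. -/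
open RealInnerProductSpace

lemma grad_zero_of_inner_eq_zero {H : Type*} [NormedAddCommGroup H]
    [InnerProductSpace ℝ H] [CompleteSpace H] (f : H → ℝ) (hf : Differentiable ℝ f)
    (h : ∀ w, ⟪gradient f w, w⟫ = 0) : ∀ v, gradient f v = 0 := by
  have hconst : ∀ v, f v = f 0 := by
    intro v
    -- consider g t = f (exp t • v)
    set g : ℝ → ℝ := fun t => f (Real.exp t • v) with hg
    have hder : ∀ t, HasDerivAt g 0 t := by
      intro t
      have h1 : HasDerivAt (fun t : ℝ => Real.exp t • v) (Real.exp t • v) t :=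
        (Real.hasDerivAt_exp t).smul_const v
      have h2 := ((hf (Real.exp t • v)).hasGradientAt).hasFDerivAt
      have h3 := h2.comp_hasDerivAt t h1
      have h4 : (InnerProductSpace.toDual ℝ H) (gradient f (Real.exp t • v))
          (Real.exp t • v) = 0 := by
        rw [InnerProductSpace.toDual_apply_apply]
        exact h _
      rw [h4] at h3
      exact h3
    have hgdiff : Differentiable ℝ g := fun t => (hder t).differentiableAt
    have hgconst : ∀ s t : ℝ, g s = g t := fun s t =>
      is_const_of_deriv_eq_zero hgdiff (fun x => (hder x).deriv) s t
    -- g is constant, limit as t → -∞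
    have hlim : Filter.Tendsto g Filter.atBot (nhds (f 0)) := by
      have : Filter.Tendsto (fun t : ℝ => Real.exp t • v) Filter.atBot (nhds (0 : H)) := by
        have := Real.tendsto_exp_atBot
        simpa using this.smul_const v
      exact (hf.continuous.tendsto 0).comp this
    have hgv : g = fun _ => f v := by
      funext t
      simpa [hg] using hgconst t 0
    rw [hgv] at hlim
    exact tendsto_nhds_unique tendsto_const_nhds hlim
  intro v
  have : f = fun _ => f 0 := funext hconst
  rw [this]
  exact gradient_const v (f 0)

/-- The decomposition of a continuously differentiable force into the sum of a Rayleigh force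
and a gyroscopic force is unique. -/
theorem force_decomposition_unique
    (n : ℕ)
    (F : EuclideanSpace ℝ (Fin n) × EuclideanSpace ℝ (Fin n) → EuclideanSpace ℝ (Fin n))
    (hF : ContDiff ℝ 1 F)
    (R R' : EuclideanSpace ℝ (Fin n) × EuclideanSpace ℝ (Fin n) → ℝ)
    (hRdiff : Differentiable ℝ R) (hR'diff : Differentiable ℝ R')
    (G G' : EuclideanSpace ℝ (Fin n) × EuclideanSpace ℝ (Fin n) → EuclideanSpace ℝ (Fin n))
    (hG : ∀ q v : EuclideanSpace ℝ (Fin n), ⟪G (q, v), v⟫ = 0)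
    (hG' : ∀ q v : EuclideanSpace ℝ (Fin n), ⟪G' (q, v), v⟫ = 0)
    (hdec : ∀ q v : EuclideanSpace ℝ (Fin n),
      F (q, v) = gradient (fun w => R (q, w)) v + G (q, v))
    (hdec' : ∀ q v : EuclideanSpace ℝ (Fin n),
      F (q, v) = gradient (fun w => R' (q, w)) v + G' (q, v)) :
    ∀ q v : EuclideanSpace ℝ (Fin n),
      gradient (fun w => R (q, w)) v = gradient (fun w => R' (q, w)) v ∧
      G (q, v) = G' (q, v) := by
  intro q v
  set f : EuclideanSpace ℝ (Fin n) → ℝ := fun w => R (q, w) with hfdef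
  set f' : EuclideanSpace ℝ (Fin n) → ℝ := fun w => R' (q, w) with hf'def
  have hfd : Differentiable ℝ f :=
    hRdiff.comp ((differentiable_const q).prodMk differentiable_id)
  have hf'd : Differentiable ℝ f' :=
    hR'diff.comp ((differentiable_const q).prodMk differentiable_id)
  set D : EuclideanSpace ℝ (Fin n) → ℝ := fun w => f w - f' w with hDdef
  have hDd : Differentiable ℝ D := hfd.sub hf'd
  have hDgrad : ∀ w, gradient D w = gradient f w - gradient f' w := by
    intro w
    have h1 := (hfd w).hasGradientAt
    have h2 := (hf'd w).hasGradientAt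
    have h3 : HasFDerivAt D ((InnerProductSpace.toDual ℝ _)
        (gradient f w - gradient f' w)) w := by
      rw [map_sub]
      exact h1.hasFDerivAt.sub h2.hasFDerivAt
    simpa only [LinearIsometryEquiv.symm_apply_apply] using h3.hasGradientAt.gradient
  have hkey : ∀ w, gradient f w - gradient f' w = G' (q, w) - G (q, w) := by
    intro w
    have := (hdec q w).symm.trans (hdec' q w)
    rw [← hfdef, ← hf'def] at this
    linear_combination (norm := module) this
  have hinner : ∀ w : EuclideanSpace ℝ (Fin n), ⟪gradient D w, w⟫ = 0 := by
    intro w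
    rw [hDgrad w, hkey w, inner_sub_left, hG, hG', sub_zero]
  have hzero := grad_zero_of_inner_eq_zero D hDd hinner v
  rw [hDgrad v] at hzero
  have hgeq : gradient f v = gradient f' v := by
    linear_combination (norm := module) hzero
  refine ⟨hgeq, ?_⟩
  have := (hdec q v).symm.trans (hdec' q v)
  rw [← hfdef, ← hf'def, hgeq] at this
  exact add_left_cancel this
end

section
/- Let S = {(q,v) ∈ ℝ² × ℝ² : v¹ ≠ 0 and v² ≠ 0} and consider the force F on ℝ² given by F(q,v) = (cos(v²)·sgn(v¹), |v²|). Then on S one has F = ∇ᵥR + G, where R(q,v) = (sin(v²)/v²)·|v¹| + (1/2)v²|v²|, so that ∇ᵥR(q,v) = ((sin(v²)/v²)·sgn(v¹), ((cos(v²)v² − sin(v²))/(v²)²)·|v¹| + |v²|), and G(q,v) = (((cos(v²)v² − sin(v²))/v²)·sgn(v¹), −((cos(v²)v² − sin(v²))/(v²)²)·|v¹|) satisfies ⟨G(q,v), v⟩ = 0 for all (q,v) ∈ S. -/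
open RealInnerProductSpace

noncomputable def coordProj (i : Fin 2) : EuclideanSpace ℝ (Fin 2) →L[ℝ] ℝ :=
  EuclideanSpace.proj i

lemma coordProj_apply (i : Fin 2) (w : EuclideanSpace ℝ (Fin 2)) : coordProj i w = w i := rfl

lemma mySignMul (x : ℝ) : Real.sign x * x = |x| := by
  rcases lt_trichotomy x 0 with h|h|h
  · rw [Real.sign_of_neg h, abs_of_neg h]; ring
  · simp [h]
  · rw [Real.sign_of_pos h, abs_of_pos h]; ring

lemma myCast (x : ℝ) (hx : x ≠ 0) : (SignType.sign x : ℝ) = Real.sign x := by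
  rcases hx.lt_or_gt with h|h
  · rw [Real.sign_of_neg h, sign_neg h]; simp
  · rw [Real.sign_of_pos h, sign_pos h]; simp

/-- On the star-shaped subbundle `S = {(q,v) : v¹ ≠ 0, v² ≠ 0}` of `ℝ² × ℝ²`, the force
`F(q,v) = (cos(v²)·sgn(v¹), |v²|)` decomposes as `F = ∇ᵥR + G`, where
`R(q,v) = (sin(v²)/v²)|v¹| + (1/2)v²|v²|`, so that
`∇ᵥR = ((sin(v²)/v²)·sgn(v¹), ((cos(v²)v² − sin(v²))/(v²)²)|v¹| + |v²|)`, and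
`G = (((cos(v²)v² − sin(v²))/v²)·sgn(v¹), −((cos(v²)v² − sin(v²))/(v²)²)|v¹|)` is
gyroscopic on `S`. -/
theorem force_decomposition_example_coulomb
    (F G : EuclideanSpace ℝ (Fin 2) × EuclideanSpace ℝ (Fin 2) → EuclideanSpace ℝ (Fin 2))
    (R : EuclideanSpace ℝ (Fin 2) × EuclideanSpace ℝ (Fin 2) → ℝ)
    (hF : ∀ q v : EuclideanSpace ℝ (Fin 2),
      F (q, v) 0 = Real.cos (v 1) * Real.sign (v 0) ∧ F (q, v) 1 = |v 1|)
    (hR : ∀ q v : EuclideanSpace ℝ (Fin 2),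
      R (q, v) = (Real.sin (v 1) / v 1) * |v 0| + (1/2) * v 1 * |v 1|)
    (hG : ∀ q v : EuclideanSpace ℝ (Fin 2),
      G (q, v) 0 = ((Real.cos (v 1) * v 1 - Real.sin (v 1)) / v 1) * Real.sign (v 0) ∧
      G (q, v) 1 = -(((Real.cos (v 1) * v 1 - Real.sin (v 1)) / (v 1)^2) * |v 0|)) :
    ∀ q v : EuclideanSpace ℝ (Fin 2), v 0 ≠ 0 → v 1 ≠ 0 →
      gradient (fun w => R (q, w)) v 0 = (Real.sin (v 1) / v 1) * Real.sign (v 0) ∧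
      gradient (fun w => R (q, w)) v 1 =
        ((Real.cos (v 1) * v 1 - Real.sin (v 1)) / (v 1)^2) * |v 0| + |v 1| ∧
      F (q, v) = gradient (fun w => R (q, w)) v + G (q, v) ∧
      ⟪G (q, v), v⟫ = 0 := by
  intro q v hv0 hv1
  set a := Real.sin (v 1) / v 1 * Real.sign (v 0) with ha
  set b := (Real.cos (v 1) * v 1 - Real.sin (v 1)) / (v 1)^2 * |v 0| + |v 1| with hb
  set g : EuclideanSpace ℝ (Fin 2) := (WithLp.equiv 2 (Fin 2 → ℝ)).symm ![a, b] with hgdef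
  have h0 : HasFDerivAt (fun w : EuclideanSpace ℝ (Fin 2) => w 0) (coordProj 0) v :=
    (coordProj 0).hasFDerivAt
  have h1 : HasFDerivAt (fun w : EuclideanSpace ℝ (Fin 2) => w 1) (coordProj 1) v :=
    (coordProj 1).hasFDerivAt
  have habs0 : HasFDerivAt (fun w : EuclideanSpace ℝ (Fin 2) => |w 0|)
      ((SignType.sign (v 0) : ℝ) • coordProj 0) v :=
    by have := (hasDerivAt_abs hv0).comp_hasFDerivAt v h0; exact this
  have habs1 : HasFDerivAt (fun w : EuclideanSpace ℝ (Fin 2) => |w 1|)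
      ((SignType.sign (v 1) : ℝ) • coordProj 1) v :=
    by have := (hasDerivAt_abs hv1).comp_hasFDerivAt v h1; exact this
  have hsin : HasDerivAt (fun y : ℝ => Real.sin y / y)
      ((Real.cos (v 1) * v 1 - Real.sin (v 1) * 1) / (v 1)^2) (v 1) :=
    (Real.hasDerivAt_sin (v 1)).div (hasDerivAt_id (v 1)) hv1
  have hq : HasFDerivAt (fun w : EuclideanSpace ℝ (Fin 2) => Real.sin (w 1) / w 1)
      (((Real.cos (v 1) * v 1 - Real.sin (v 1) * 1) / (v 1)^2) • coordProj 1) v :=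
    by have := hsin.comp_hasFDerivAt v h1; exact this
  have hA := hq.mul habs0
  have hhalf : HasFDerivAt (fun w : EuclideanSpace ℝ (Fin 2) => 1/2 * w 1)
      ((1/2 : ℝ) • coordProj 1) v := h1.const_mul (1/2)
  have hB := hhalf.mul habs1
  have hL := hA.add hB
  have hEq : (InnerProductSpace.toDual ℝ (EuclideanSpace ℝ (Fin 2)) g : _)
      = (((Real.sin (v 1) / v 1) : ℝ) •
          ((SignType.sign (v 0) : ℝ) • coordProj 0) +
        |v 0| • (((Real.cos (v 1) * v 1 - Real.sin (v 1) * 1) / (v 1) ^ 2) • coordProj 1)) +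
        ((1 / 2 * v 1) • ((SignType.sign (v 1) : ℝ) • coordProj 1) +
          |v 1| • ((1 / 2 : ℝ) • coordProj 1)) := by
    refine ContinuousLinearMap.ext fun w => ?_
    simp only [InnerProductSpace.toDual_apply_apply, PiLp.inner_apply, Fin.sum_univ_two,
      ContinuousLinearMap.add_apply, ContinuousLinearMap.smul_apply, coordProj_apply,
      RCLike.inner_apply, smul_eq_mul, conj_trivial, hgdef, ha, hb,
      myCast _ hv0, myCast _ hv1]
    have hg0 : ((WithLp.equiv 2 (Fin 2 → ℝ)).symm ![a, b]) 0 = a := rfl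
    have hg1 : ((WithLp.equiv 2 (Fin 2 → ℝ)).symm ![a, b]) 1 = b := rfl
    rw [hg0, hg1]
    linear_combination (-(w 1) / 2) * mySignMul (v 1)
  have hgrad : HasGradientAt
      (fun w : EuclideanSpace ℝ (Fin 2) => Real.sin (w 1) / w 1 * |w 0| + 1/2 * w 1 * |w 1|) g v :=
    hasGradientAt_iff_hasFDerivAt.mpr (hEq ▸ hL)
  have hfun : (fun w : EuclideanSpace ℝ (Fin 2) => R (q, w))
      = fun w : EuclideanSpace ℝ (Fin 2) => Real.sin (w 1) / w 1 * |w 0| + 1/2 * w 1 * |w 1| := by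
    funext w
    rw [hR q w]
  have hgv : gradient (fun w => R (q, w)) v = g := by
    rw [hfun]; exact hgrad.gradient
  have hg0 : gradient (fun w => R (q, w)) v 0 = a := by rw [hgv]; rfl
  have hg1 : gradient (fun w => R (q, w)) v 1 = b := by rw [hgv]; rfl
  refine ⟨hg0, hg1, ?_, ?_⟩
  · ext i
    fin_cases i
    · show F (q, v) 0 = (gradient (fun w => R (q, w)) v + G (q, v)) 0
      rw [PiLp.add_apply, hg0, (hF q v).1, (hG q v).1, ha]
      field_simp
      ring
    · show F (q, v) 1 = (gradient (fun w => R (q, w)) v + G (q, v)) 1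
      rw [PiLp.add_apply, hg1, (hF q v).2, (hG q v).2, hb]
      ring
  · have hs0 := mySignMul (v 0)
    simp only [PiLp.inner_apply, Fin.sum_univ_two, RCLike.inner_apply, conj_trivial,
      (hG q v).1, (hG q v).2]
    rw [mul_comm (v 0), mul_assoc, hs0]
    field_simp
    ring
end
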